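/- Let R be a commutative ring, A a 2×2 matrix over R such that A − I₂ is invertible, β ∈ R², and k ∈ ℕ. Let F = X^{k+1} mod charpoly(A) with coefficients f₀ = F(0-th coefficient) and f₁ = F(1st coefficient). Then (f₁·A + (f₀ − 1)·I₂)·(A − I₂)^{−1}·β = Σ_{i=0}^{k} A^i·β, i.e., the projected matrix geometric sum algorithm correctly returns Σ_{i=0}^k A^i β. -/

import Mathlib

open Polynomial Matrix

/-- Correctness of the projected matrix geometric sum (PMGS) algorithm: with
`F = X^{k+1} mod charpoly(A)`, `f₀ = F.coeff 0`, `f₁ = F.coeff 1`, and `A − I₂`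
invertible, `(f₁A + (f₀ − 1)I₂)·(A − I₂)⁻¹·β = Σ_{i=0}^k A^i β`. -/
theorem pmgs_correct {R : Type*} [CommRing R] (A : Matrix (Fin 2) (Fin 2) R)
    (hA : IsUnit (A - 1)) (β : Fin 2 → R) (k : ℕ) :
    ((((X : Polynomial R) ^ (k + 1) %ₘ A.charpoly).coeff 1 • A +
        (((X : Polynomial R) ^ (k + 1) %ₘ A.charpoly).coeff 0 - 1) • (1 : Matrix (Fin 2) (Fin 2) R))
       * (A - 1)⁻¹) *ᵥ β
      = ∑ i ∈ Finset.range (k + 1), (A ^ i) *ᵥ β := by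
  rcases subsingleton_or_nontrivial R with hs | hs
  · exact funext fun _ => Subsingleton.elim _ _
  set r : Polynomial R := (X : Polynomial R) ^ (k + 1) %ₘ A.charpoly with hr
  have hmonic : A.charpoly.Monic := A.charpoly_monic
  have h2 : A.charpoly.natDegree = 2 := A.charpoly_natDegree_eq_dim
  have hdeg : r.natDegree ≤ 1 := by
    have hne : A.charpoly ≠ 1 := fun h => by simp [h] at h2
    have h3 := natDegree_modByMonic_lt ((X : Polynomial R) ^ (k + 1)) hmonic hne
    rw [← hr] at h3; omega
  have haeval : aeval A r = A ^ (k + 1) := by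
    have key := modByMonic_add_div ((X : Polynomial R) ^ (k + 1)) A.charpoly
    have := congrArg (aeval A) key
    simpa [map_add, _root_.map_mul, Matrix.aeval_self_charpoly] using this
  have hr_eq : r = C (r.coeff 1) * X + C (r.coeff 0) :=
    eq_X_add_C_of_natDegree_le_one hdeg
  have haeval2 : r.coeff 1 • A + r.coeff 0 • (1 : Matrix (Fin 2) (Fin 2) R) = A ^ (k + 1) := by
    rw [← haeval]
    conv_rhs => rw [hr_eq]
    simp [map_add, _root_.map_mul, aeval_X, aeval_C, Algebra.algebraMap_eq_smul_one, smul_mul_assoc]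
  have hmat : r.coeff 1 • A + (r.coeff 0 - 1) • (1 : Matrix (Fin 2) (Fin 2) R)
      = A ^ (k + 1) - 1 := by
    rw [← haeval2, sub_smul, one_smul, add_sub_assoc]
  have hdet : IsUnit (A - 1).det := (Matrix.isUnit_iff_isUnit_det _).mp hA
  have hinv : (A - 1) * (A - 1)⁻¹ = 1 := Matrix.mul_nonsing_inv _ hdet
  have hgeom : (A ^ (k + 1) - 1) * (A - 1)⁻¹ = ∑ i ∈ Finset.range (k + 1), A ^ i := by
    rw [← geom_sum_mul, mul_assoc, hinv, mul_one]
  rw [hmat, hgeom]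
  induction (k + 1) with
  | zero => simp
  | succ n ih => rw [Finset.sum_range_succ, Finset.sum_range_succ, Matrix.add_mulVec, ih]
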